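/- arXiv:1910.12831 — 4 statements merged into one kernel-verified Lean document; each statement's English description precedes it below -/
import Mathlib

section
/- Let $\mathbb{Z}$ be a finite set and $P,Q$ probability measures on $\mathbb{Z}$ with full support and $D(P\|Q)>0$. For each $n$, let $\beta_n(\epsilon) = \min\{Q^n(\mathcal{A}) : \mathcal{A}\subseteq\mathbb{Z}^n,\ P^n(\mathcal{A}^c)\le\epsilon\}$. Then for every fixed $\epsilon\in(0,1)$, $\liminf_{n\to\infty} -\frac{1}{n}\log\beta_n(\epsilon) \ge D(P\|Q)$. -/
set_option linter.unusedSectionVars false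

open Finset
open scoped Classical

section steinAux

variable {Z : Type*} [Fintype Z] [Nonempty Z]

lemma stein_sum_prod (n : ℕ) (h : Fin n → Z → ℝ) :
    ∑ z : Fin n → Z, ∏ i, h i (z i) = ∏ i, ∑ x, h i x :=
  (Fintype.prod_sum (fun i (x : Z) => h i x)).symm

lemma stein_exp_one (P : Z → ℝ) (hP1 : ∑ z, P z = 1) (n : ℕ) :
    ∑ z : Fin n → Z, ∏ i, P (z i) = 1 := by
  rw [stein_sum_prod]; simp [hP1]

lemma stein_exp_single (P : Z → ℝ) (hP1 : ∑ z, P z = 1) (n : ℕ) (i : Fin n) (f : Z → ℝ) :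
    ∑ z : Fin n → Z, (∏ k, P (z k)) * f (z i) = ∑ x, P x * f x := by
  have key : ∀ z : Fin n → Z,
      (∏ k, P (z k)) * f (z i) = ∏ k, (P (z k) * (if k = i then f (z k) else 1)) := by
    intro z
    rw [Finset.prod_mul_distrib, Finset.prod_ite_eq' Finset.univ i (fun k => f (z k))]
    simp
  simp_rw [key]
  rw [stein_sum_prod n (fun k x => P x * (if k = i then f x else 1))]
  rw [Finset.prod_eq_single i]
  · simp
  · intro k _ hk
    simp [hk, hP1]
  · simp

lemma stein_exp_pair (P : Z → ℝ) (hP1 : ∑ z, P z = 1) (n : ℕ) (i j : Fin n) (hij : i ≠ j)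
    (f g : Z → ℝ) :
    ∑ z : Fin n → Z, (∏ k, P (z k)) * (f (z i) * g (z j)) =
      (∑ x, P x * f x) * (∑ x, P x * g x) := by
  have key : ∀ z : Fin n → Z,
      (∏ k, P (z k)) * (f (z i) * g (z j)) =
        ∏ k, (P (z k) * ((if k = i then f (z k) else 1) * (if k = j then g (z k) else 1))) := by
    intro z
    rw [Finset.prod_mul_distrib, Finset.prod_mul_distrib,
      Finset.prod_ite_eq' Finset.univ i (fun k => f (z k)),
      Finset.prod_ite_eq' Finset.univ j (fun k => g (z k))]
    simp [mul_assoc]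
  simp_rw [key]
  rw [stein_sum_prod n (fun k x => P x * ((if k = i then f x else 1) * (if k = j then g x else 1)))]
  rw [← Finset.prod_subset (Finset.subset_univ ({i, j} : Finset (Fin n)))
      (by intro k _ hk
          simp only [Finset.mem_insert, Finset.mem_singleton, not_or] at hk
          simp [hk.1, hk.2, hP1]),
    Finset.prod_pair hij]
  simp [hij, hij.symm]

lemma stein_second_moment (P : Z → ℝ) (hP1 : ∑ z, P z = 1) (Y : Z → ℝ)
    (hY0 : ∑ x, P x * Y x = 0) (n : ℕ) :
    ∑ z : Fin n → Z, (∏ k, P (z k)) * (∑ i, Y (z i)) ^ 2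
      = n * ∑ x, P x * (Y x) ^ 2 := by
  have sq_expand : ∀ z : Fin n → Z,
      (∏ k, P (z k)) * (∑ i, Y (z i)) ^ 2
        = ∑ i, ∑ j, (∏ k, P (z k)) * (Y (z i) * Y (z j)) := by
    intro z
    rw [sq, Finset.sum_mul_sum]
    rw [Finset.mul_sum]
    refine Finset.sum_congr rfl fun i _ => ?_
    rw [Finset.mul_sum]
  simp_rw [sq_expand]
  rw [Finset.sum_comm]
  have inner : ∀ i : Fin n, ∑ j : Fin n, ∑ z : Fin n → Z,
      (∏ k, P (z k)) * (Y (z i) * Y (z j)) = ∑ x, P x * (Y x) ^ 2 := by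
    intro i
    have : ∀ j : Fin n, (∑ z : Fin n → Z, (∏ k, P (z k)) * (Y (z i) * Y (z j)))
        = if j = i then ∑ x, P x * (Y x) ^ 2 else 0 := by
      intro j
      by_cases hji : j = i
      · subst hji
        simp_rw [← sq]
        rw [stein_exp_single P hP1 n j (fun x => (Y x) ^ 2)]
        simp
      · rw [stein_exp_pair P hP1 n i j (fun h => hji h.symm) Y Y, hY0, mul_zero]
        simp [hji]
    simp_rw [this]
    simp
  calc ∑ i : Fin n, ∑ z : Fin n → Z, ∑ j : Fin n, (∏ k, P (z k)) * (Y (z i) * Y (z j))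
      = ∑ i : Fin n, ∑ j : Fin n, ∑ z : Fin n → Z, (∏ k, P (z k)) * (Y (z i) * Y (z j)) :=
        Finset.sum_congr rfl fun i _ => Finset.sum_comm
    _ = ∑ _i : Fin n, ∑ x, P x * (Y x) ^ 2 := Finset.sum_congr rfl fun i _ => inner i
    _ = n * ∑ x, P x * (Y x) ^ 2 := by simp [Finset.sum_const, nsmul_eq_mul]

end steinAux

theorem stmt_7 {Z : Type*} [Fintype Z] [Nonempty Z]
    (P Q : Z → ℝ) (hPpos : ∀ z, 0 < P z) (hP1 : ∑ z, P z = 1)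
    (hQpos : ∀ z, 0 < Q z) (hQ1 : ∑ z, Q z = 1)
    (hD : 0 < ∑ z, P z * Real.log (P z / Q z))
    (β : ℕ → ℝ → ℝ)
    (hβ : ∀ n ε, β n ε = sInf {q : ℝ | ∃ A : Finset (Fin n → Z),
        (∑ z ∈ Aᶜ, ∏ i, P (z i)) ≤ ε ∧ q = ∑ z ∈ A, ∏ i, Q (z i)})
    (ε : ℝ) (hε : ε ∈ Set.Ioo (0 : ℝ) 1) :
    (∑ z, P z * Real.log (P z / Q z)) ≤
      Filter.atTop.liminf (fun n : ℕ => -(1 / (n : ℝ)) * Real.log (β n ε)) := by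
  obtain ⟨hε0, hε1⟩ := hε
  set X : Z → ℝ := fun z => Real.log (P z / Q z) with hXdef
  set D : ℝ := ∑ z, P z * X z with hDdef
  set Y : Z → ℝ := fun z => X z - D with hYdef
  have hY0 : ∑ x, P x * Y x = 0 := by
    simp only [hYdef, mul_sub]
    rw [Finset.sum_sub_distrib, ← Finset.sum_mul, hP1, one_mul, ← hDdef, sub_self]
  set V : ℝ := ∑ x, P x * (Y x) ^ 2 with hVdef
  have hVnn : 0 ≤ V :=
    Finset.sum_nonneg fun x _ => mul_nonneg (hPpos x).le (sq_nonneg _)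
  -- basic facts about the feasible sets
  have hbdd : ∀ n : ℕ, BddBelow {q : ℝ | ∃ A : Finset (Fin n → Z),
      (∑ z ∈ Aᶜ, ∏ i, P (z i)) ≤ ε ∧ q = ∑ z ∈ A, ∏ i, Q (z i)} := by
    intro n
    refine ⟨0, fun q hq => ?_⟩
    obtain ⟨A, -, rfl⟩ := hq
    exact Finset.sum_nonneg fun z _ => Finset.prod_nonneg fun i _ => (hQpos _).le
  have hSne : ∀ n : ℕ, Set.Nonempty {q : ℝ | ∃ A : Finset (Fin n → Z),
      (∑ z ∈ Aᶜ, ∏ i, P (z i)) ≤ ε ∧ q = ∑ z ∈ A, ∏ i, Q (z i)} := by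
    intro n
    exact ⟨∑ z ∈ (Finset.univ : Finset (Fin n → Z)), ∏ i, Q (z i), Finset.univ,
      by simp [hε0.le], rfl⟩
  have hSfin : ∀ n : ℕ, Set.Finite {q : ℝ | ∃ A : Finset (Fin n → Z),
      (∑ z ∈ Aᶜ, ∏ i, P (z i)) ≤ ε ∧ q = ∑ z ∈ A, ∏ i, Q (z i)} := by
    intro n
    apply Set.Finite.subset (Set.finite_range
      (fun A : Finset (Fin n → Z) => ∑ z ∈ A, ∏ i, Q (z i)))
    rintro q ⟨A, -, rfl⟩
    exact ⟨A, rfl⟩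
  -- the minimal Q value
  set m : ℝ := Finset.univ.inf' Finset.univ_nonempty Q with hmdef
  have hm0 : 0 < m := by
    obtain ⟨x, -, hx⟩ := Finset.exists_mem_eq_inf' Finset.univ_nonempty Q
    rw [hmdef, hx]; exact hQpos x
  have hmle : ∀ x : Z, m ≤ Q x := fun x => Finset.inf'_le Q (Finset.mem_univ x)
  -- lower bound on β
  have hβlb : ∀ n : ℕ, m ^ n ≤ β n ε := by
    intro n
    rw [hβ]
    refine le_csInf (hSne n) ?_
    rintro q ⟨A, hAε, rfl⟩
    have hAne : A.Nonempty := by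
      rw [Finset.nonempty_iff_ne_empty]
      rintro rfl
      rw [Finset.compl_empty] at hAε
      rw [stein_exp_one P hP1 n] at hAε
      linarith
    obtain ⟨z₀, hz₀⟩ := hAne
    calc m ^ n = ∏ _i : Fin n, m := by simp
      _ ≤ ∏ i, Q (z₀ i) := Finset.prod_le_prod (fun _ _ => hm0.le) (fun i _ => hmle _)
      _ ≤ ∑ z ∈ A, ∏ i, Q (z i) :=
          Finset.single_le_sum (f := fun z : Fin n → Z => ∏ i, Q (z i))
            (fun z _ => Finset.prod_nonneg fun i _ => (hQpos _).le) hz₀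
  have hβpos : ∀ n : ℕ, 0 < β n ε := fun n => lt_of_lt_of_le (pow_pos hm0 n) (hβlb n)
  -- key eventual bound
  have key : ∀ δ : ℝ, 0 < δ → ∀ᶠ n : ℕ in Filter.atTop,
      D - δ ≤ -(1 / (n : ℝ)) * Real.log (β n ε) := by
    intro δ hδ
    have h1 : ∀ᶠ n : ℕ in Filter.atTop, V / (ε * δ ^ 2) ≤ (n : ℝ) :=
      (tendsto_natCast_atTop_atTop (R := ℝ)).eventually_ge_atTop _
    filter_upwards [h1, Filter.eventually_ge_atTop 1] with n hn1 hn2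
    have hn0 : (0 : ℝ) < n := by exact_mod_cast hn2
    set A : Finset (Fin n → Z) :=
      Finset.univ.filter (fun z => (n : ℝ) * (D - δ) ≤ ∑ i, X (z i)) with hAdef
    -- sum of Y along coordinates
    have hsumY : ∀ z : Fin n → Z, (∑ i, Y (z i)) = (∑ i, X (z i)) - (n : ℝ) * D := by
      intro z
      simp [hYdef, Finset.sum_sub_distrib, mul_comm]
    -- Step 1 : P^n(Aᶜ) ≤ ε
    have hVbound : V ≤ (n : ℝ) * (ε * δ ^ 2) := by
      rw [div_le_iff₀ (by positivity)] at hn1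
      linarith [hn1]
    have hcompl : (∑ z ∈ Aᶜ, ∏ i, P (z i)) ≤ ε := by
      have hpt : ∀ z ∈ Aᶜ, ((n : ℝ) * δ) ^ 2 * (∏ i, P (z i)) ≤
          (∏ i, P (z i)) * (∑ i, Y (z i)) ^ 2 := by
        intro z hz
        have hzlt : (∑ i, X (z i)) < (n : ℝ) * (D - δ) := by
          rw [Finset.mem_compl, hAdef, Finset.mem_filter] at hz
          push_neg at hz
          exact hz (Finset.mem_univ z)
        have hY' : (∑ i, Y (z i)) < -((n : ℝ) * δ) := by
          rw [hsumY]; nlinarith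
        have hsq : ((n : ℝ) * δ) ^ 2 ≤ (∑ i, Y (z i)) ^ 2 := by
          nlinarith [mul_pos (show (0:ℝ) < -(∑ i, Y (z i)) - (n : ℝ) * δ by linarith)
            (mul_pos hn0 hδ)]
        have hWnn : 0 ≤ ∏ i, P (z i) := Finset.prod_nonneg fun i _ => (hPpos _).le
        nlinarith
      have hsum1 : ((n : ℝ) * δ) ^ 2 * (∑ z ∈ Aᶜ, ∏ i, P (z i)) ≤
          ∑ z ∈ Aᶜ, (∏ i, P (z i)) * (∑ i, Y (z i)) ^ 2 := by
        rw [Finset.mul_sum]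
        exact Finset.sum_le_sum hpt
      have hsum2 : (∑ z ∈ Aᶜ, (∏ i, P (z i)) * (∑ i, Y (z i)) ^ 2) ≤
          ∑ z : Fin n → Z, (∏ i, P (z i)) * (∑ i, Y (z i)) ^ 2 :=
        Finset.sum_le_sum_of_subset_of_nonneg (Finset.subset_univ _)
          (fun z _ _ => mul_nonneg (Finset.prod_nonneg fun i _ => (hPpos _).le) (sq_nonneg _))
      have hsm : (∑ z : Fin n → Z, (∏ i, P (z i)) * (∑ i, Y (z i)) ^ 2) = n * V :=
        stein_second_moment P hP1 Y hY0 n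
      have hfinal : ((n : ℝ) * δ) ^ 2 * (∑ z ∈ Aᶜ, ∏ i, P (z i)) ≤
          ((n : ℝ) * δ) ^ 2 * ε := by
        calc ((n : ℝ) * δ) ^ 2 * (∑ z ∈ Aᶜ, ∏ i, P (z i))
            ≤ (n : ℝ) * V := by rw [← hsm]; exact hsum1.trans hsum2
          _ ≤ (n : ℝ) * ((n : ℝ) * (ε * δ ^ 2)) :=
              mul_le_mul_of_nonneg_left hVbound hn0.le
          _ = ((n : ℝ) * δ) ^ 2 * ε := by ring
      have hc : (0 : ℝ) < ((n : ℝ) * δ) ^ 2 := by positivity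
      exact le_of_mul_le_mul_left hfinal hc
    -- Step 2 : Q^n(A) ≤ exp(-(n(D-δ)))
    have hQA : (∑ z ∈ A, ∏ i, Q (z i)) ≤ Real.exp (-((n : ℝ) * (D - δ))) := by
      have hQpt : ∀ z ∈ A, (∏ i, Q (z i)) ≤
          (∏ i, P (z i)) * Real.exp (-((n : ℝ) * (D - δ))) := by
        intro z hz
        have hzge : (n : ℝ) * (D - δ) ≤ ∑ i, X (z i) := by
          rw [hAdef, Finset.mem_filter] at hz
          exact hz.2
        have hexp : Real.exp (∑ i, X (z i)) = (∏ i, P (z i)) / (∏ i, Q (z i)) := by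
          rw [Real.exp_sum, ← Finset.prod_div_distrib]
          refine Finset.prod_congr rfl fun i _ => ?_
          exact Real.exp_log (div_pos (hPpos _) (hQpos _))
        have hQz : (∏ i, Q (z i)) = (∏ i, P (z i)) * Real.exp (-(∑ i, X (z i))) := by
          rw [Real.exp_neg, hexp]
          have hPne : (∏ i, P (z i)) ≠ 0 :=
            ne_of_gt (Finset.prod_pos fun i _ => hPpos _)
          have hQne : (∏ i, Q (z i)) ≠ 0 :=
            ne_of_gt (Finset.prod_pos fun i _ => hQpos _)
          field_simp
        rw [hQz]
        refine mul_le_mul_of_nonneg_left ?_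
          (Finset.prod_nonneg fun i _ => (hPpos _).le)
        exact Real.exp_le_exp.2 (neg_le_neg hzge)
      calc (∑ z ∈ A, ∏ i, Q (z i))
          ≤ ∑ z ∈ A, (∏ i, P (z i)) * Real.exp (-((n : ℝ) * (D - δ))) :=
            Finset.sum_le_sum hQpt
        _ = (∑ z ∈ A, ∏ i, P (z i)) * Real.exp (-((n : ℝ) * (D - δ))) := by
            rw [Finset.sum_mul]
        _ ≤ 1 * Real.exp (-((n : ℝ) * (D - δ))) := by
            refine mul_le_mul_of_nonneg_right ?_ (Real.exp_nonneg _)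
            rw [← stein_exp_one P hP1 n]
            exact Finset.sum_le_sum_of_subset_of_nonneg (Finset.subset_univ _)
              (fun z _ _ => Finset.prod_nonneg fun i _ => (hPpos _).le)
        _ = Real.exp (-((n : ℝ) * (D - δ))) := one_mul _
    -- Step 3 : β ≤ exp(-(n(D-δ)))
    have hβle : β n ε ≤ Real.exp (-((n : ℝ) * (D - δ))) := by
      rw [hβ]
      exact (csInf_le (hbdd n) ⟨A, hcompl, rfl⟩).trans hQA
    -- conclude
    have hlog : Real.log (β n ε) ≤ -((n : ℝ) * (D - δ)) := by
      calc Real.log (β n ε) ≤ Real.log (Real.exp (-((n : ℝ) * (D - δ)))) :=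
            Real.log_le_log (hβpos n) hβle
        _ = -((n : ℝ) * (D - δ)) := Real.log_exp _
    have hmul := mul_le_mul_of_nonneg_left hlog (by positivity : (0:ℝ) ≤ 1 / (n : ℝ))
    have heq : (1 / (n : ℝ)) * (-((n : ℝ) * (D - δ))) = -(D - δ) := by
      field_simp
    rw [heq] at hmul
    linarith
  -- eventual upper bound, coboundedness
  have hub : ∀ᶠ n : ℕ in Filter.atTop,
      -(1 / (n : ℝ)) * Real.log (β n ε) ≤ -Real.log m := by
    filter_upwards [Filter.eventually_ge_atTop 1] with n hn2
    have hn0 : (0 : ℝ) < n := by exact_mod_cast hn2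
    have hlb : Real.log (m ^ n) ≤ Real.log (β n ε) :=
      Real.log_le_log (pow_pos hm0 n) (hβlb n)
    rw [Real.log_pow] at hlb
    have hmul := mul_le_mul_of_nonneg_left hlb (by positivity : (0:ℝ) ≤ 1 / (n : ℝ))
    have heq : (1 / (n : ℝ)) * ((n : ℕ) * Real.log m) = Real.log m := by
      field_simp
    rw [heq] at hmul
    linarith
  have hbd : Filter.IsBoundedUnder (· ≤ ·) Filter.atTop
      (fun n : ℕ => -(1 / (n : ℝ)) * Real.log (β n ε)) :=
    Filter.isBoundedUnder_of_eventually_le hub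
  have hco := hbd.isCoboundedUnder_ge
  refine le_of_forall_sub_le fun δ hδ => Filter.le_liminf_of_le hco (key δ hδ)
end

section
/- Let $\mathbb{Z}$ be a finite set and $P,Q$ probability measures on $\mathbb{Z}$ with full support. For each $n$, let $\beta_n(\epsilon) = \min\{Q^n(\mathcal{A}) : \mathcal{A}\subseteq\mathbb{Z}^n,\ P^n(\mathcal{A}^c)\le\epsilon\}$. Then for every fixed $\epsilon\in(0,1)$, $\limsup_{n\to\infty} -\frac{1}{n}\log\beta_n(\epsilon) \le D(P\|Q)$. -/
open Finset
open scoped Classical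

lemma aux_sum_prod {Z : Type*} [Fintype Z] (h : Z → ℝ) (n : ℕ) :
    ∑ z : Fin n → Z, ∏ i, h (z i) = (∑ w, h w) ^ n := by
  classical
  rw [← Fintype.prod_sum fun (_ : Fin n) (j : Z) => h j]
  simp

lemma aux_exists_lam {Z : Type*} [Fintype Z] (p f : Z → ℝ) (hp1 : ∑ z, p z = 1)
    (δ : ℝ) (hδ : 0 < δ) :
    ∃ lam : ℝ, 0 < lam ∧
      Real.exp (-(lam * ((∑ z, p z * f z) + δ))) * ∑ z, p z * Real.exp (lam * f z) < 1 := by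
  set D : ℝ := ∑ z, p z * f z with hD
  set t : ℝ := D + δ with ht
  set g : ℝ → ℝ := fun lam => Real.exp (-(lam * t)) * ∑ z, p z * Real.exp (lam * f z) with hg
  have hg0 : g 0 = 1 := by simp [hg, hp1]
  have h1 : HasDerivAt (fun l : ℝ => Real.exp (-(l * t))) (-t) 0 := by
    have := (((hasDerivAt_id (0 : ℝ)).mul_const t).neg).exp
    simpa using this
  have h2 : HasDerivAt (fun l : ℝ => ∑ z, p z * Real.exp (l * f z)) D 0 := by
    rw [hD]
    apply HasDerivAt.fun_sum
    intro z _
    have := (((hasDerivAt_id (0 : ℝ)).mul_const (f z)).exp).const_mul (p z)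
    simpa [mul_comm] using this
  have h3 : HasDerivAt g ((-t) * (∑ z, p z * Real.exp (0 * f z)) + Real.exp (-(0 * t)) * D) 0 :=
    h1.mul h2
  have heq : (-t) * (∑ z, p z * Real.exp (0 * f z)) + Real.exp (-(0 * t)) * D = -δ := by
    simp [hp1]; rw [ht]; ring
  rw [heq] at h3
  have hslope := hasDerivAt_iff_tendsto_slope.mp h3
  have hneg : ∀ᶠ x in nhdsWithin (0:ℝ) {(0:ℝ)}ᶜ, slope g 0 x < 0 :=
    hslope.eventually (gt_mem_nhds (by linarith : -δ < 0))
  have hmono : nhdsWithin (0:ℝ) (Set.Ioi 0) ≤ nhdsWithin (0:ℝ) {(0:ℝ)}ᶜ :=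
    nhdsWithin_mono 0 (fun x hx => Set.mem_compl_singleton_iff.mpr (ne_of_gt hx))
  obtain ⟨x, hx1, hx2⟩ := ((hneg.filter_mono hmono).and eventually_mem_nhdsWithin).exists
  refine ⟨x, hx2, ?_⟩
  rw [slope_def_field] at hx1
  have hx0 : (0:ℝ) < x := hx2
  have hnum : g x - g 0 < 0 := by
    rcases div_neg_iff.mp (by simpa using hx1) with ⟨h', h''⟩ | ⟨h', h''⟩
    · linarith
    · linarith
  have : g x < 1 := by rw [hg0] at hnum; linarith
  simpa [hg, ht, hD] using this

theorem stmt_8 {Z : Type*} [Fintype Z] [Nonempty Z]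
    (P Q : Z → ℝ) (hPpos : ∀ z, 0 < P z) (hP1 : ∑ z, P z = 1)
    (hQpos : ∀ z, 0 < Q z) (hQ1 : ∑ z, Q z = 1)
    
    (β : ℕ → ℝ → ℝ)
    (hβ : ∀ n ε, β n ε = sInf {q : ℝ | ∃ A : Finset (Fin n → Z),
        (∑ z ∈ Aᶜ, ∏ i, P (z i)) ≤ ε ∧ q = ∑ z ∈ A, ∏ i, Q (z i)})
    (ε : ℝ) (hε : ε ∈ Set.Ioo (0 : ℝ) 1) :
    Filter.atTop.limsup (fun n : ℕ => -(1 / (n : ℝ)) * Real.log (β n ε)) ≤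
      ∑ z, P z * Real.log (P z / Q z) := by
  classical
  obtain ⟨hε0, hε1⟩ := hε
  set u : ℕ → ℝ := fun n : ℕ => -(1 / (n : ℝ)) * Real.log (β n ε) with hu
  set D : ℝ := ∑ z, P z * Real.log (P z / Q z) with hDdef
  have hQ' : ∀ w, Q w = P w * Real.exp (-(Real.log (P w / Q w))) := by
    intro w
    rw [Real.exp_neg, Real.exp_log (div_pos (hPpos w) (hQpos w)), inv_div, mul_comm,
      div_mul_cancel₀ _ (hPpos w).ne']
  have hone : ∀ n : ℕ, (1:ℝ) ∈ {q : ℝ | ∃ A : Finset (Fin n → Z),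
      (∑ z ∈ Aᶜ, ∏ i, P (z i)) ≤ ε ∧ q = ∑ z ∈ A, ∏ i, Q (z i)} := by
    intro n
    refine ⟨univ, by simp [hε0.le], ?_⟩
    rw [show (∑ z ∈ (univ : Finset (Fin n → Z)), ∏ i, Q (z i))
        = ∑ z : Fin n → Z, ∏ i, Q (z i) from rfl, aux_sum_prod, hQ1, one_pow]
  have hlb0 : ∀ n : ℕ, ∀ q ∈ {q : ℝ | ∃ A : Finset (Fin n → Z),
      (∑ z ∈ Aᶜ, ∏ i, P (z i)) ≤ ε ∧ q = ∑ z ∈ A, ∏ i, Q (z i)}, (0:ℝ) ≤ q := by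
    rintro n q ⟨A, -, rfl⟩
    exact Finset.sum_nonneg fun z _ => Finset.prod_nonneg fun i _ => (hQpos _).le
  have hβ0 : ∀ n, 0 ≤ β n ε := fun n => by
    rw [hβ]; exact le_csInf ⟨1, hone n⟩ (hlb0 n)
  have hβ1 : ∀ n, β n ε ≤ 1 := fun n => by
    rw [hβ]; exact csInf_le ⟨0, hlb0 n⟩ (hone n)
  have hu0 : ∀ n, 0 ≤ u n := by
    intro n
    have h1 : Real.log (β n ε) ≤ 0 := Real.log_nonpos (hβ0 n) (hβ1 n)
    have h2 : (0:ℝ) ≤ 1 / (n:ℝ) := by positivity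
    rw [hu]
    simp only []
    nlinarith
  have htot : ∀ n : ℕ, ∑ z : Fin n → Z, ∏ i, P (z i) = 1 := fun n => by
    rw [aux_sum_prod, hP1, one_pow]
  have hc : (0:ℝ) < (1-ε)/2 := by linarith
  refine le_of_forall_pos_le_add ?_
  intro δ hδ
  obtain ⟨lam, hlam, hr1⟩ := aux_exists_lam P (fun z => Real.log (P z / Q z)) hP1 (δ/2)
    (by linarith)
  set r : ℝ := Real.exp (-(lam * (D + δ/2))) * ∑ z, P z * Real.exp (lam * Real.log (P z / Q z))
    with hrdef
  have hr1' : r < 1 := by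
    rw [hrdef, hDdef]
    simpa using hr1
  have hr0 : 0 ≤ r :=
    mul_nonneg (Real.exp_pos _).le
      (Finset.sum_nonneg fun z _ => mul_nonneg (hPpos z).le (Real.exp_pos _).le)
  -- Chernoff bound
  have chern : ∀ n : ℕ,
      ∑ z ∈ (univ.filter (fun z : Fin n → Z =>
        ∑ i, Real.log (P (z i) / Q (z i)) ≤ (n:ℝ) * (D + δ/2)))ᶜ, ∏ i, P (z i) ≤ r ^ n := by
    intro n
    rw [Finset.compl_filter]
    have hterm : ∀ z : Fin n → Z,
        Real.exp (lam * ((∑ i, Real.log (P (z i) / Q (z i))) - (n:ℝ) * (D + δ/2)))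
          * ∏ i, P (z i)
        = Real.exp (-(lam * (D + δ/2))) ^ n
          * ∏ i, (P (z i) * Real.exp (lam * Real.log (P (z i) / Q (z i)))) := by
      intro z
      have e1 : lam * ((∑ i, Real.log (P (z i) / Q (z i))) - (n:ℝ) * (D + δ/2))
          = (∑ i : Fin n, lam * Real.log (P (z i) / Q (z i))) + (n:ℝ) * (-(lam * (D + δ/2))) := by
        rw [mul_sub, Finset.mul_sum]; ring
      rw [e1, Real.exp_add, Real.exp_nat_mul, Real.exp_sum, Finset.prod_mul_distrib]
      ring
    calc ∑ z ∈ univ.filter (fun z : Fin n → Z =>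
          ¬ ∑ i, Real.log (P (z i) / Q (z i)) ≤ (n:ℝ) * (D + δ/2)), ∏ i, P (z i)
        ≤ ∑ z ∈ univ.filter (fun z : Fin n → Z =>
          ¬ ∑ i, Real.log (P (z i) / Q (z i)) ≤ (n:ℝ) * (D + δ/2)),
            Real.exp (lam * ((∑ i, Real.log (P (z i) / Q (z i))) - (n:ℝ) * (D + δ/2)))
              * ∏ i, P (z i) := by
          refine Finset.sum_le_sum ?_
          intro z hz
          have hz' : (n:ℝ) * (D + δ/2) < ∑ i, Real.log (P (z i) / Q (z i)) :=
            lt_of_not_ge (Finset.mem_filter.mp hz).2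
          have h1 : (1:ℝ) ≤ Real.exp (lam * ((∑ i, Real.log (P (z i) / Q (z i)))
              - (n:ℝ) * (D + δ/2))) := Real.one_le_exp (by nlinarith)
          exact le_mul_of_one_le_left (Finset.prod_nonneg fun i _ => (hPpos _).le) h1
      _ ≤ ∑ z : Fin n → Z,
            Real.exp (lam * ((∑ i, Real.log (P (z i) / Q (z i))) - (n:ℝ) * (D + δ/2)))
              * ∏ i, P (z i) := by
          refine Finset.sum_le_sum_of_subset_of_nonneg (Finset.filter_subset _ _) ?_
          intro z _ _
          exact mul_nonneg (Real.exp_pos _).le (Finset.prod_nonneg fun i _ => (hPpos _).le)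
      _ = r ^ n := by
          rw [Finset.sum_congr rfl (fun z _ => hterm z), ← Finset.mul_sum,
            aux_sum_prod (fun w => P w * Real.exp (lam * Real.log (P w / Q w))) n, ← mul_pow]
  -- lower bound for β for good n
  have hkey : ∀ n : ℕ, r ^ n ≤ (1-ε)/2 →
      (1-ε)/2 * Real.exp (-((n:ℝ) * (D + δ/2))) ≤ β n ε := by
    intro n hn
    rw [hβ]
    refine le_csInf ⟨1, hone n⟩ ?_
    rintro q ⟨A, hA, rfl⟩
    set T : Finset (Fin n → Z) := univ.filter (fun z : Fin n → Z =>
      ∑ i, Real.log (P (z i) / Q (z i)) ≤ (n:ℝ) * (D + δ/2)) with hT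
    have hTm : 1 - r ^ n ≤ ∑ z ∈ T, ∏ i, P (z i) := by
      have h1 := Finset.sum_add_sum_compl T (fun z => ∏ i, P (z i))
      rw [htot n] at h1
      have h2 := chern n
      rw [← hT] at h2
      linarith
    have hTA : (1-ε)/2 ≤ ∑ z ∈ T ∩ A, ∏ i, P (z i) := by
      have hsplit := Finset.sum_inter_add_sum_sdiff T A (fun z => ∏ i, P (z i))
      have hsub : T \ A ⊆ Aᶜ := by
        intro z hz
        rw [Finset.mem_compl]
        exact (Finset.mem_sdiff.mp hz).2
      have hle : ∑ z ∈ T \ A, ∏ i, P (z i) ≤ ∑ z ∈ Aᶜ, ∏ i, P (z i) :=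
        Finset.sum_le_sum_of_subset_of_nonneg hsub
          (fun z _ _ => Finset.prod_nonneg fun i _ => (hPpos _).le)
      linarith
    calc (1-ε)/2 * Real.exp (-((n:ℝ) * (D + δ/2)))
        ≤ (∑ z ∈ T ∩ A, ∏ i, P (z i)) * Real.exp (-((n:ℝ) * (D + δ/2))) :=
          mul_le_mul_of_nonneg_right hTA (Real.exp_pos _).le
      _ = ∑ z ∈ T ∩ A, (∏ i, P (z i)) * Real.exp (-((n:ℝ) * (D + δ/2))) := Finset.sum_mul _ _ _
      _ ≤ ∑ z ∈ T ∩ A, ∏ i, Q (z i) := by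
          refine Finset.sum_le_sum ?_
          intro z hz
          have hzT : ∑ i, Real.log (P (z i) / Q (z i)) ≤ (n:ℝ) * (D + δ/2) :=
            (Finset.mem_filter.mp (Finset.mem_inter.mp hz).1).2
          have hprod : ∏ i, Q (z i)
              = (∏ i, P (z i)) * Real.exp (-(∑ i, Real.log (P (z i) / Q (z i)))) := by
            calc ∏ i, Q (z i)
                = ∏ i, (P (z i) * Real.exp (-(Real.log (P (z i) / Q (z i))))) :=
                  Finset.prod_congr rfl fun i _ => hQ' (z i)
              _ = (∏ i, P (z i)) * ∏ i, Real.exp (-(Real.log (P (z i) / Q (z i)))) :=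
                  Finset.prod_mul_distrib
              _ = (∏ i, P (z i)) * Real.exp (∑ i, -(Real.log (P (z i) / Q (z i)))) := by
                  rw [Real.exp_sum]
              _ = (∏ i, P (z i)) * Real.exp (-(∑ i, Real.log (P (z i) / Q (z i)))) := by
                  rw [Finset.sum_neg_distrib]
          rw [hprod]
          exact mul_le_mul_of_nonneg_left (Real.exp_le_exp.mpr (by linarith))
            (Finset.prod_nonneg fun i _ => (hPpos _).le)
      _ ≤ ∑ z ∈ A, ∏ i, Q (z i) :=
          Finset.sum_le_sum_of_subset_of_nonneg (Finset.inter_subset_right)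
            (fun z _ _ => Finset.prod_nonneg fun i _ => (hQpos _).le)
  -- eventual bound on u
  have hev1 : ∀ᶠ n in Filter.atTop, r ^ n ≤ (1-ε)/2 :=
    ((tendsto_pow_atTop_nhds_zero_of_lt_one hr0 hr1').eventually
      (gt_mem_nhds hc)).mono fun n h => h.le
  have hev2 : ∀ᶠ n : ℕ in Filter.atTop, -Real.log ((1-ε)/2) / (n:ℝ) ≤ δ/2 :=
    ((tendsto_const_div_atTop_nhds_zero_nat (-Real.log ((1-ε)/2))).eventually
      (gt_mem_nhds (by linarith : (0:ℝ) < δ/2))).mono fun n h => h.le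
  have hev3 : ∀ᶠ n : ℕ in Filter.atTop, 1 ≤ n := Filter.eventually_ge_atTop 1
  have hev : ∀ᶠ n in Filter.atTop, u n ≤ D + δ := by
    filter_upwards [hev1, hev2, hev3] with n h1 h2 h3
    have hn0 : (0:ℝ) < (n:ℝ) := by exact_mod_cast h3
    have hb := hkey n h1
    have hbpos : 0 < (1-ε)/2 * Real.exp (-((n:ℝ) * (D + δ/2))) :=
      mul_pos hc (Real.exp_pos _)
    have hlog : Real.log ((1-ε)/2) + (-((n:ℝ) * (D + δ/2))) ≤ Real.log (β n ε) := by
      have h4 := Real.log_le_log hbpos hb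
      rwa [Real.log_mul hc.ne' (Real.exp_pos _).ne', Real.log_exp] at h4
    show -(1 / (n:ℝ)) * Real.log (β n ε) ≤ D + δ
    have hcneg : -(1 / (n:ℝ)) ≤ 0 := by
      have h5 : (0:ℝ) ≤ 1 / (n:ℝ) := by positivity
      linarith
    have h4 := mul_le_mul_of_nonpos_left hlog hcneg
    have h5 : -(1 / (n:ℝ)) * (Real.log ((1-ε)/2) + (-((n:ℝ) * (D + δ/2))))
        = -Real.log ((1-ε)/2) / (n:ℝ) + (D + δ/2) := by
      field_simp
      ring
    linarith
  exact Filter.limsup_le_of_le (Filter.isCoboundedUnder_le_of_le Filter.atTop hu0) hev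
end

section
/- Let $\mathbb{Z}$ be a finite set, $P,Q$ probability measures on $\mathbb{Z}$ with full support, $C = \max_z |\log(P(\{z\})/Q(\{z\}))|$, and $n\ge 1$, $\epsilon\in(0,1)$. Then the optimal Type II error $\beta_n(\epsilon) = \min\{Q^n(\mathcal{A}) : P^n(\mathcal{A}^c)\le\epsilon\}$ satisfies $-\frac{1}{n}\log\beta_n(\epsilon) \ge D(P\|Q) - C\sqrt{\frac{2\ln(1/\epsilon)}{n}}$. -/
open Finset
open scoped Classical


lemma hoeff_denom_pos {p : ℝ} (hp0 : 0 ≤ p) (hp1 : p ≤ 1) (h : ℝ) :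
    0 < 1 - p + p * Real.exp h := by
  rcases lt_or_ge p 1 with h1 | h1
  · have := mul_nonneg hp0 (Real.exp_pos h).le
    linarith
  · have hp : p = 1 := le_antisymm hp1 h1
    simpa [hp] using Real.exp_pos h

lemma hoeff_core {p : ℝ} (hp0 : 0 ≤ p) (hp1 : p ≤ 1) (h : ℝ) :
    Real.log (1 - p + p * Real.exp h) ≤ p * h + h ^ 2 / 8 := by
  set f1 : ℝ → ℝ := fun x => p + x / 4 - p * Real.exp x / (1 - p + p * Real.exp x) with hf1
  set F : ℝ → ℝ := fun x => p * x + x ^ 2 / 8 - Real.log (1 - p + p * Real.exp x) with hF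
  have hDpos : ∀ x : ℝ, 0 < 1 - p + p * Real.exp x := hoeff_denom_pos hp0 hp1
  -- derivative of f1
  have hf1deriv : ∀ x : ℝ, HasDerivAt f1
      (1 / 4 - (p * Real.exp x * (1 - p + p * Real.exp x) - p * Real.exp x * (p * Real.exp x)) /
        (1 - p + p * Real.exp x) ^ 2) x := by
    intro x
    have hE : HasDerivAt (fun y : ℝ => p * Real.exp y) (p * Real.exp x) x :=
      (Real.hasDerivAt_exp x).const_mul p
    have hD : HasDerivAt (fun y : ℝ => 1 - p + p * Real.exp y) (p * Real.exp x) x :=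
      hE.const_add (1 - p)
    have hq : HasDerivAt (fun y : ℝ => p * Real.exp y / (1 - p + p * Real.exp y))
        ((p * Real.exp x * (1 - p + p * Real.exp x) - p * Real.exp x * (p * Real.exp x)) /
          (1 - p + p * Real.exp x) ^ 2) x := hE.div hD (hDpos x).ne'
    have hlin : HasDerivAt (fun y : ℝ => p + y / 4) (1 / 4) x := by
      simpa using ((hasDerivAt_id x).div_const 4).const_add p
    exact hlin.sub hq
  have hf1derivnonneg : ∀ x : ℝ, 0 ≤ 1 / 4 -
      (p * Real.exp x * (1 - p + p * Real.exp x) - p * Real.exp x * (p * Real.exp x)) /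
        (1 - p + p * Real.exp x) ^ 2 := by
    intro x
    have hD := hDpos x
    rw [sub_nonneg, div_le_iff₀ (by positivity)]
    nlinarith [Real.exp_pos x, sq_nonneg (1 - p - p * Real.exp x), mul_nonneg hp0 (Real.exp_pos x).le]
  have hf1mono : Monotone f1 := by
    apply monotone_of_deriv_nonneg
    · exact fun x => (hf1deriv x).differentiableAt
    · intro x
      rw [(hf1deriv x).deriv]
      exact hf1derivnonneg x
  have hf10 : f1 0 = 0 := by
    simp only [hf1, Real.exp_zero, mul_one]
    field_simp
    ring
  -- derivative of F
  have hFderiv : ∀ x : ℝ, HasDerivAt F (f1 x) x := by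
    intro x
    have hE : HasDerivAt (fun y : ℝ => p * Real.exp y) (p * Real.exp x) x :=
      (Real.hasDerivAt_exp x).const_mul p
    have hD : HasDerivAt (fun y : ℝ => 1 - p + p * Real.exp y) (p * Real.exp x) x :=
      hE.const_add (1 - p)
    have hlog : HasDerivAt (fun y : ℝ => Real.log (1 - p + p * Real.exp y))
        (p * Real.exp x / (1 - p + p * Real.exp x)) x := hD.log (hDpos x).ne'
    have hlin : HasDerivAt (fun y : ℝ => p * y + y ^ 2 / 8) (p + 2 * x / 8) x := by
      have h1 : HasDerivAt (fun y : ℝ => p * y) p x := by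
        simpa using (hasDerivAt_id x).const_mul p
      have h2 : HasDerivAt (fun y : ℝ => y ^ 2 / 8) (2 * x / 8) x := by
        simpa using (hasDerivAt_pow 2 x).div_const 8
      exact h1.add h2
    have := hlin.sub hlog
    convert this using 1
    show p + x / 4 - p * Real.exp x / (1 - p + p * Real.exp x) = _
    ring
    all_goals rfl
  have hF0 : F 0 = 0 := by
    simp [hF]
  have hFdiff : Differentiable ℝ F := fun y => (hFderiv y).differentiableAt
  have key : ∀ x : ℝ, 0 ≤ F x := by
    intro x
    rcases le_or_gt 0 x with hx | hx
    · have hFmono : MonotoneOn F (Set.Ici (0 : ℝ)) := by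
        apply monotoneOn_of_deriv_nonneg (convex_Ici 0)
        · exact hFdiff.continuous.continuousOn
        · exact hFdiff.differentiableOn
        · intro y hy
          rw [(hFderiv y).deriv]
          rw [interior_Ici] at hy
          calc (0 : ℝ) = f1 0 := hf10.symm
          _ ≤ f1 y := hf1mono hy.le
      have := hFmono (Set.self_mem_Ici) (Set.mem_Ici.2 hx) hx
      linarith [hF0 ▸ this]
    · have hFanti : AntitoneOn F (Set.Iic (0 : ℝ)) := by
        apply antitoneOn_of_deriv_nonpos (convex_Iic 0)
        · exact hFdiff.continuous.continuousOn
        · exact hFdiff.differentiableOn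
        · intro y hy
          rw [(hFderiv y).deriv]
          rw [interior_Iic] at hy
          calc f1 y ≤ f1 0 := hf1mono hy.le
          _ = 0 := hf10
      have := hFanti (Set.mem_Iic.2 hx.le) (Set.self_mem_Iic) hx.le
      linarith [hF0 ▸ this]
  have := key h
  simp only [hF] at this
  linarith


lemma mgf_le {Z : Type*} [Fintype Z] (P : Z → ℝ) (hP : ∀ z, 0 ≤ P z)
    (h1 : ∑ z, P z = 1) (X : Z → ℝ) (C : ℝ) (hCpos : 0 < C)
    (hX : ∀ z, |X z| ≤ C) (s : ℝ) :
    ∑ z, P z * Real.exp (s * X z) ≤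
      Real.exp (s * (∑ z, P z * X z) + s ^ 2 * C ^ 2 / 2) := by
  set D := ∑ z, P z * X z with hD
  have hDle : D ≤ C := by
    calc D ≤ ∑ z, P z * C := by
          apply Finset.sum_le_sum
          intro z _
          exact mul_le_mul_of_nonneg_left (le_of_abs_le (hX z)) (hP z)
    _ = C := by rw [← Finset.sum_mul, h1, one_mul]
  have hDge : -C ≤ D := by
    calc (-C : ℝ) = ∑ z, P z * (-C) := by rw [← Finset.sum_mul, h1, one_mul]
    _ ≤ D := by
          apply Finset.sum_le_sum
          intro z _
          exact mul_le_mul_of_nonneg_left (neg_le_of_abs_le (hX z)) (hP z)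
  set q := (D + C) / (2 * C) with hq
  have hq0 : 0 ≤ q := by
    apply div_nonneg (by linarith) (by linarith)
  have hq1 : q ≤ 1 := by
    rw [hq, div_le_one (by linarith)]
    linarith
  set A := Real.exp (s * C) with hA
  set B := Real.exp (-(s * C)) with hB
  -- pointwise convexity bound
  have hpt : ∀ z, Real.exp (s * X z) ≤
      (X z + C) / (2 * C) * A + (1 - (X z + C) / (2 * C)) * B := by
    intro z
    set a := (X z + C) / (2 * C) with ha
    have ha0 : 0 ≤ a := by
      apply div_nonneg _ (by linarith)
      have := neg_le_of_abs_le (hX z); linarith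
    have ha1 : a ≤ 1 := by
      rw [ha, div_le_one (by linarith)]
      have := le_of_abs_le (hX z); linarith
    have hconv := convexOn_exp.2 (Set.mem_univ (s * C)) (Set.mem_univ (-(s * C)))
      ha0 (by linarith : (0:ℝ) ≤ 1 - a) (by ring)
    have harg : a • (s * C) + (1 - a) • (-(s * C)) = s * X z := by
      simp only [smul_eq_mul, ha]
      field_simp
      ring
    rw [harg] at hconv
    simpa [smul_eq_mul] using hconv
  have hsum1 : ∑ z, P z * Real.exp (s * X z) ≤
      ∑ z, P z * ((X z + C) / (2 * C) * A + (1 - (X z + C) / (2 * C)) * B) := by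
    apply Finset.sum_le_sum
    intro z _
    exact mul_le_mul_of_nonneg_left (hpt z) (hP z)
  have hsum2 : ∑ z, P z * ((X z + C) / (2 * C) * A + (1 - (X z + C) / (2 * C)) * B) =
      q * A + (1 - q) * B := by
    have hterm : ∀ z, P z * ((X z + C) / (2 * C) * A + (1 - (X z + C) / (2 * C)) * B) =
        P z * X z * ((A - B) / (2 * C)) + P z * ((A + B) / 2) := by
      intro z
      field_simp
      ring
    rw [Finset.sum_congr rfl (fun z _ => hterm z), Finset.sum_add_distrib,
      ← Finset.sum_mul, ← Finset.sum_mul, h1, ← hD]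
    rw [hq]
    field_simp
    ring
  have hBpos : 0 < B := Real.exp_pos _
  have hfinal : q * A + (1 - q) * B ≤ Real.exp (s * D + s ^ 2 * C ^ 2 / 2) := by
    have hAB : A = B * Real.exp (2 * s * C) := by
      rw [hA, hB, ← Real.exp_add]
      ring_nf
    have hpos : 0 < 1 - q + q * Real.exp (2 * s * C) := by
      rcases lt_or_ge q 1 with h' | h'
      · have := mul_nonneg hq0 (Real.exp_pos (2 * s * C)).le
        linarith
      · have : q = 1 := le_antisymm hq1 h'
        simpa [this] using Real.exp_pos (2 * s * C)
    have heq : q * A + (1 - q) * B = B * (1 - q + q * Real.exp (2 * s * C)) := by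
      rw [hAB]; ring
    rw [heq]
    have hlog := hoeff_core hq0 hq1 (2 * s * C)
    have : (1 : ℝ) - q + q * Real.exp (2 * s * C) ≤
        Real.exp (q * (2 * s * C) + (2 * s * C) ^ 2 / 8) := by
      calc (1 : ℝ) - q + q * Real.exp (2 * s * C)
          = Real.exp (Real.log (1 - q + q * Real.exp (2 * s * C))) := (Real.exp_log hpos).symm
        _ ≤ _ := Real.exp_le_exp.2 hlog
    calc B * (1 - q + q * Real.exp (2 * s * C))
        ≤ B * Real.exp (q * (2 * s * C) + (2 * s * C) ^ 2 / 8) :=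
          mul_le_mul_of_nonneg_left this hBpos.le
      _ = Real.exp (-(s * C) + (q * (2 * s * C) + (2 * s * C) ^ 2 / 8)) := by
          rw [hB, ← Real.exp_add]
      _ = Real.exp (s * D + s ^ 2 * C ^ 2 / 2) := by
          congr 1
          have h2q : q * (2 * C) = D + C := by
            rw [hq]; field_simp
          linear_combination s * h2q
  calc ∑ z, P z * Real.exp (s * X z) ≤ q * A + (1 - q) * B := hsum1.trans (le_of_eq hsum2)
    _ ≤ Real.exp (s * D + s ^ 2 * C ^ 2 / 2) := hfinal


theorem stmt_10 {Z : Type*} [Fintype Z] [Nonempty Z]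
    (P Q : Z → ℝ) (hPpos : ∀ z, 0 < P z) (hP1 : ∑ z, P z = 1)
    (hQpos : ∀ z, 0 < Q z) (hQ1 : ∑ z, Q z = 1)
    (C : ℝ)
    (hC : C = Finset.univ.sup' Finset.univ_nonempty (fun z => |Real.log (P z / Q z)|))
    (n : ℕ) (hn : 1 ≤ n) (ε : ℝ) (hε : ε ∈ Set.Ioo (0 : ℝ) 1)
    (β : ℝ)
    (hβ : β = sInf {q : ℝ | ∃ A : Finset (Fin n → Z),
        (∑ z ∈ Aᶜ, ∏ i, P (z i)) ≤ ε ∧ q = ∑ z ∈ A, ∏ i, Q (z i)}) :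
    (∑ z, P z * Real.log (P z / Q z)) - C * Real.sqrt (2 * Real.log (1 / ε) / n) ≤
      -(1 / (n : ℝ)) * Real.log β := by
  obtain ⟨hε0, hε1⟩ := hε
  have hnpos : (0 : ℝ) < n := by exact_mod_cast hn
  set X : Z → ℝ := fun z => Real.log (P z / Q z) with hXdef
  set D : ℝ := ∑ z, P z * X z with hDdef
  have hXC : ∀ z, |X z| ≤ C := by
    intro z
    rw [hC]
    exact Finset.le_sup' (fun z => |Real.log (P z / Q z)|) (Finset.mem_univ z)
  have hC0 : 0 ≤ C := (abs_nonneg _).trans (hXC (Classical.arbitrary Z))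
  -- total masses
  have hPn : ∑ z : Fin n → Z, ∏ i, P (z i) = 1 := by
    rw [← Fintype.sum_pow, hP1, one_pow]
  have hQn : ∑ z : Fin n → Z, ∏ i, Q (z i) = 1 := by
    rw [← Fintype.sum_pow, hQ1, one_pow]
  set S : Set ℝ := {q : ℝ | ∃ A : Finset (Fin n → Z),
      (∑ z ∈ Aᶜ, ∏ i, P (z i)) ≤ ε ∧ q = ∑ z ∈ A, ∏ i, Q (z i)} with hSdef
  have hSne : S.Nonempty := by
    refine ⟨1, Finset.univ, ?_, ?_⟩
    · simp [hε0.le]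
    · exact hQn.symm
  have hSbdd : BddBelow S := by
    refine ⟨0, fun q hq => ?_⟩
    obtain ⟨A, _, rfl⟩ := hq
    exact Finset.sum_nonneg fun z _ => Finset.prod_nonneg fun i _ => (hQpos (z i)).le
  have hβle1 : β ≤ 1 := by
    rw [hβ]
    exact csInf_le hSbdd ⟨Finset.univ, by simp [hε0.le], hQn.symm⟩
  -- positivity of β
  set m : ℝ := Finset.univ.inf' Finset.univ_nonempty Q with hm
  have hmpos : 0 < m := by
    rw [hm, Finset.lt_inf'_iff]
    exact fun z _ => hQpos z
  have hβpos : 0 < β := by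
    have hlow : m ^ n ≤ β := by
      rw [hβ]
      apply le_csInf hSne
      rintro q ⟨A, hA, rfl⟩
      have hAne : A.Nonempty := by
        by_contra hemp
        rw [Finset.not_nonempty_iff_eq_empty] at hemp
        rw [hemp, Finset.compl_empty, hPn] at hA
        linarith
      obtain ⟨z₀, hz₀⟩ := hAne
      calc m ^ n = ∏ _i : Fin n, m := by simp
        _ ≤ ∏ i, Q (z₀ i) := by
            apply Finset.prod_le_prod (fun i _ => hmpos.le)
            intro i _
            exact Finset.inf'_le Q (Finset.mem_univ (z₀ i))
        _ ≤ ∑ z ∈ A, ∏ i, Q (z i) := by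
            apply Finset.single_le_sum (fun z _ => ?_) hz₀
            exact Finset.prod_nonneg fun i _ => (hQpos (z i)).le
    exact lt_of_lt_of_le (by positivity) hlow
  rcases eq_or_lt_of_le hC0 with hCz | hCpos
  · -- C = 0 case
    have hX0 : ∀ z, X z = 0 := by
      intro z
      have := hXC z
      rw [← hCz] at this
      exact abs_nonpos_iff.mp this
    have hD0 : D = 0 := by
      rw [hDdef]
      exact Finset.sum_eq_zero fun z _ => by rw [hX0 z, mul_zero]
    rw [hD0, ← hCz]
    have hlogβ : Real.log β ≤ 0 := Real.log_nonpos hβpos.le hβle1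
    have := mul_nonneg (le_of_lt (by positivity : (0:ℝ) < 1 / n)) (neg_nonneg.2 hlogβ)
    simp only [zero_mul, zero_sub, neg_mul]
    nlinarith
  · -- C > 0 case
    set L : ℝ := Real.log (1 / ε) with hL
    have hLpos : 0 < L := Real.log_pos (by rw [lt_div_iff₀ hε0]; linarith)
    set δ : ℝ := C * Real.sqrt (2 * L / n) with hδ
    have hδpos : 0 < δ := by
      apply mul_pos hCpos
      apply Real.sqrt_pos.2
      positivity
    have hδsq : δ ^ 2 = C ^ 2 * (2 * L / n) := by
      rw [hδ, mul_pow, Real.sq_sqrt (by positivity)]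
    set t : ℝ := δ / C ^ 2 with ht
    have htpos : 0 < t := by positivity
    set A : Finset (Fin n → Z) :=
      Finset.univ.filter (fun z : Fin n → Z => (n : ℝ) * (D - δ) < ∑ i, X (z i)) with hAdef
    have hpow : (∑ z, P z * Real.exp (-t * X z)) ^ n =
        ∑ z : Fin n → Z, ∏ i, (P (z i) * Real.exp (-t * X (z i))) := by
      simpa using Fintype.sum_pow (fun z => P z * Real.exp (-t * X z)) n
    -- MGF bound
    have hmgf : ∑ z, P z * Real.exp (-t * X z) ≤ Real.exp (-t * D + t ^ 2 * C ^ 2 / 2) := by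
      have := mgf_le P (fun z => (hPpos z).le) hP1 X C hCpos hXC (-t)
      rw [← hDdef] at this
      simpa [neg_sq] using this
    have hgnonneg : (0:ℝ) ≤ ∑ z, P z * Real.exp (-t * X z) :=
      Finset.sum_nonneg fun z _ => mul_nonneg (hPpos z).le (Real.exp_pos _).le
    -- Claim 1 : type I error
    have claim1 : (∑ z ∈ Aᶜ, ∏ i, P (z i)) ≤ ε := by
      have step1 : ∀ z ∈ Aᶜ, ∏ i, P (z i) ≤
          Real.exp (t * ((n : ℝ) * (D - δ))) * ∏ i, (P (z i) * Real.exp (-t * X (z i))) := by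
        intro z hz
        have hzS : ∑ i, X (z i) ≤ (n : ℝ) * (D - δ) := by
          rw [Finset.mem_compl, hAdef, Finset.mem_filter] at hz
          push_neg at hz
          exact hz (Finset.mem_univ z)
        have hsplit : ∏ i, (P (z i) * Real.exp (-t * X (z i))) =
            (∏ i, P (z i)) * Real.exp (-t * ∑ i, X (z i)) := by
          rw [Finset.prod_mul_distrib, ← Real.exp_sum, ← Finset.mul_sum]
        rw [hsplit, ← mul_assoc, mul_comm (Real.exp _) (∏ i, P (z i)), mul_assoc,
          ← Real.exp_add]
        apply le_mul_of_one_le_right (Finset.prod_nonneg fun i _ => (hPpos (z i)).le)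
        apply Real.one_le_exp
        nlinarith
      calc (∑ z ∈ Aᶜ, ∏ i, P (z i))
          ≤ ∑ z ∈ Aᶜ, Real.exp (t * ((n : ℝ) * (D - δ))) *
              ∏ i, (P (z i) * Real.exp (-t * X (z i))) := Finset.sum_le_sum step1
        _ ≤ ∑ z : Fin n → Z, Real.exp (t * ((n : ℝ) * (D - δ))) *
              ∏ i, (P (z i) * Real.exp (-t * X (z i))) := by
            apply Finset.sum_le_sum_of_subset_of_nonneg (Finset.subset_univ _)
            intro z _ _
            exact mul_nonneg (Real.exp_pos _).le (Finset.prod_nonneg fun i _ =>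
              mul_nonneg (hPpos (z i)).le (Real.exp_pos _).le)
        _ = Real.exp (t * ((n : ℝ) * (D - δ))) *
              (∑ z, P z * Real.exp (-t * X z)) ^ n := by
            rw [← Finset.mul_sum, hpow]
        _ ≤ Real.exp (t * ((n : ℝ) * (D - δ))) *
              Real.exp (-t * D + t ^ 2 * C ^ 2 / 2) ^ n := by
            apply mul_le_mul_of_nonneg_left _ (Real.exp_pos _).le
            exact pow_le_pow_left₀ hgnonneg hmgf n
        _ = Real.exp (t * ((n : ℝ) * (D - δ)) + (n : ℝ) * (-t * D + t ^ 2 * C ^ 2 / 2)) := by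
            rw [← Real.exp_nat_mul, ← Real.exp_add]
        _ = Real.exp (Real.log ε) := by
            congr 1
            have h1 : t * ((n : ℝ) * (D - δ)) + (n : ℝ) * (-t * D + t ^ 2 * C ^ 2 / 2) =
                (n : ℝ) * (-(t * δ) + t ^ 2 * C ^ 2 / 2) := by ring
            rw [h1]
            have h2 : -(t * δ) + t ^ 2 * C ^ 2 / 2 = -(δ ^ 2) / (2 * C ^ 2) := by
              rw [ht]; field_simp; ring
            rw [h2, hδsq]
            have hLε : L = -Real.log ε := by
              rw [hL, one_div, Real.log_inv]
            rw [hLε]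
            field_simp
        _ = ε := Real.exp_log hε0
    -- Claim 2 : type II error
    have claim2 : (∑ z ∈ A, ∏ i, Q (z i)) ≤ Real.exp (-((n : ℝ) * (D - δ))) := by
      have step : ∀ z ∈ A, ∏ i, Q (z i) ≤
          (∏ i, P (z i)) * Real.exp (-((n : ℝ) * (D - δ))) := by
        intro z hz
        have hzS : (n : ℝ) * (D - δ) < ∑ i, X (z i) := by
          rw [hAdef, Finset.mem_filter] at hz
          exact hz.2
        have hQP : ∀ w : Z, Q w = P w * Real.exp (-X w) := by
          intro w
          rw [hXdef]
          rw [Real.exp_neg, Real.exp_log (div_pos (hPpos w) (hQpos w))]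
          field_simp
          rw [mul_div_assoc, div_self (hPpos w).ne', mul_one]
        have heq : ∏ i, Q (z i) = (∏ i, P (z i)) * Real.exp (-(∑ i, X (z i))) := by
          calc ∏ i, Q (z i) = ∏ i, (P (z i) * Real.exp (-X (z i))) := by
                apply Finset.prod_congr rfl
                intro i _
                exact hQP (z i)
            _ = (∏ i, P (z i)) * Real.exp (∑ i, -X (z i)) := by
                rw [Finset.prod_mul_distrib, ← Real.exp_sum]
            _ = (∏ i, P (z i)) * Real.exp (-(∑ i, X (z i))) := by
                rw [Finset.sum_neg_distrib]
        rw [heq]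
        apply mul_le_mul_of_nonneg_left _ (Finset.prod_nonneg fun i _ => (hPpos (z i)).le)
        exact Real.exp_le_exp.2 (by linarith)
      calc (∑ z ∈ A, ∏ i, Q (z i))
          ≤ ∑ z ∈ A, (∏ i, P (z i)) * Real.exp (-((n : ℝ) * (D - δ))) :=
            Finset.sum_le_sum step
        _ = (∑ z ∈ A, ∏ i, P (z i)) * Real.exp (-((n : ℝ) * (D - δ))) := by
            rw [← Finset.sum_mul]
        _ ≤ 1 * Real.exp (-((n : ℝ) * (D - δ))) := by
            apply mul_le_mul_of_nonneg_right _ (Real.exp_pos _).le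
            rw [← hPn]
            apply Finset.sum_le_sum_of_subset_of_nonneg (Finset.subset_univ _)
            intro z _ _
            exact Finset.prod_nonneg fun i _ => (hPpos (z i)).le
        _ = Real.exp (-((n : ℝ) * (D - δ))) := one_mul _
    -- conclude
    have hβexp : β ≤ Real.exp (-((n : ℝ) * (D - δ))) := by
      rw [hβ]
      exact le_trans (csInf_le hSbdd ⟨A, claim1, rfl⟩) claim2
    have hlogβ : Real.log β ≤ -((n : ℝ) * (D - δ)) := by
      have := (Real.log_le_log_iff hβpos (Real.exp_pos _)).2 hβexp
      rwa [Real.log_exp] at this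
    have hfin := mul_le_mul_of_nonneg_left hlogβ (le_of_lt (by positivity : (0:ℝ) < 1 / n))
    have hninv : (1 / (n : ℝ)) * ((n : ℝ) * (D - δ)) = D - δ := by
      field_simp
    clear_value S m X D L δ t A
    linarith [hfin, hninv]
end

section
/- Let $\mathbb{Z}$ be a finite set, $P,Q$ probability measures on $\mathbb{Z}$ with full support, $C = \max_z |\log(P(\{z\})/Q(\{z\}))|$ with $C>0$, and $n\ge 1$. For any $\epsilon\in(0,1)$ and any $s > C\sqrt{2\ln(1/(1-\epsilon))/n}$, the optimal Type II error $\beta_n(\epsilon)$ satisfies $-\frac{1}{n}\log\beta_n(\epsilon) \le D(P\|Q) + s + \frac{1}{n}\log\frac{1}{1-\epsilon-e^{-ns^2/(2C^2)}}$. -/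
open Finset
open scoped Classical


lemma hoeffding_core (p : ℝ) (hp0 : 0 ≤ p) (hp1 : p ≤ 1) (t : ℝ) :
    (1 - p) + p * Real.exp t ≤ Real.exp (p * t + t ^ 2 / 8) := by
  have hd : ∀ u : ℝ, 0 < 1 - p + p * Real.exp u := by
    intro u
    rcases eq_or_lt_of_le hp1 with h | h
    · simp [← h]; positivity
    · have : 0 ≤ p * Real.exp u := by positivity
      linarith
  set G : ℝ → ℝ := fun u => u ^ 2 / 8 + p * u - Real.log (1 - p + p * Real.exp u) with hGdef
  set G' : ℝ → ℝ := fun u => u / 4 + p - p * Real.exp u / (1 - p + p * Real.exp u) with hG'def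
  have hG : ∀ u, HasDerivAt G (G' u) u := by
    intro u
    have h1 : HasDerivAt (fun u : ℝ => 1 - p + p * Real.exp u) (p * Real.exp u) u := by
      simpa using (((Real.hasDerivAt_exp u).const_mul p).const_add (1 - p))
    have h2 := (h1.log (hd u).ne')
    have h3 : HasDerivAt (fun u : ℝ => u ^ 2 / 8 + p * u) (u / 4 + p) u := by
      have := ((hasDerivAt_pow 2 u).div_const 8).add ((hasDerivAt_id u).const_mul p)
      exact this.congr_deriv (by ring)
    exact h3.sub h2
  have hG' : ∀ u, HasDerivAt G' (1 / 4 - p * (1 - p) * Real.exp u / (1 - p + p * Real.exp u) ^ 2) u := by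
    intro u
    have h1 : HasDerivAt (fun u : ℝ => 1 - p + p * Real.exp u) (p * Real.exp u) u := by
      simpa using (((Real.hasDerivAt_exp u).const_mul p).const_add (1 - p))
    have h2 : HasDerivAt (fun u : ℝ => p * Real.exp u) (p * Real.exp u) u :=
      (Real.hasDerivAt_exp u).const_mul p
    have h3 := h2.div h1 (hd u).ne'
    have h4 : HasDerivAt (fun u : ℝ => u / 4 + p) (1 / 4) u := by
      simpa using ((hasDerivAt_id u).div_const 4).add_const p
    have h5 := h4.sub h3
    exact h5.congr_deriv (by field_simp; ring)
  have hnn : ∀ u : ℝ, 0 ≤ 1 / 4 - p * (1 - p) * Real.exp u / (1 - p + p * Real.exp u) ^ 2 := by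
    intro u
    have hdu := hd u
    rw [sub_nonneg, div_le_iff₀ (by positivity)]
    nlinarith [sq_nonneg (1 - p - p * Real.exp u), Real.exp_pos u]
  have hG'mono : Monotone G' := by
    apply monotone_of_deriv_nonneg
    · exact fun u => (hG' u).differentiableAt
    · intro u
      rw [(hG' u).deriv]
      exact hnn u
  have hG'0 : G' 0 = 0 := by simp [hG'def]
  have hGpos : ∀ u : ℝ, 0 ≤ G u := by
    intro u
    have hG0 : G 0 = 0 := by simp [hGdef]
    rcases le_or_gt 0 u with h | h
    · have : MonotoneOn G (Set.Ici 0) := by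
        apply monotoneOn_of_deriv_nonneg (convex_Ici 0)
          (fun x _ => ((hG x).differentiableAt.continuousAt.continuousWithinAt))
        · exact fun x hx => (hG x).differentiableAt.differentiableWithinAt
        · intro x hx
          rw [(hG x).deriv]
          rw [← hG'0]
          exact hG'mono (le_of_lt (by simpa using hx))
      have := this (Set.self_mem_Ici) (Set.mem_Ici.2 h) h
      linarith [hG0 ▸ this]
    · have : AntitoneOn G (Set.Iic 0) := by
        apply antitoneOn_of_deriv_nonpos (convex_Iic 0)
          (fun x _ => ((hG x).differentiableAt.continuousAt.continuousWithinAt))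
        · exact fun x hx => (hG x).differentiableAt.differentiableWithinAt
        · intro x hx
          rw [(hG x).deriv]
          rw [← hG'0]
          exact hG'mono (le_of_lt (by simpa using hx))
      have := this (Set.mem_Iic.2 h.le) (Set.self_mem_Iic) h.le
      linarith [hG0 ▸ this]
  have hGt := hGpos t
  have hlog : Real.log (1 - p + p * Real.exp t) ≤ p * t + t ^ 2 / 8 := by
    simp only [hGdef] at hGt; linarith
  calc (1 - p) + p * Real.exp t = 1 - p + p * Real.exp t := by ring
    _ ≤ Real.exp (p * t + t ^ 2 / 8) := by
        rw [← Real.exp_log (hd t)]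
        exact Real.exp_le_exp.2 hlog



lemma mgf_bound {Z : Type*} [Fintype Z] (w X : Z → ℝ) (hw : ∀ z, 0 ≤ w z)
    (hw1 : ∑ z, w z = 1) (C : ℝ) (hCpos : 0 < C) (hX : ∀ z, |X z| ≤ C) (l : ℝ) :
    ∑ z, w z * Real.exp (l * X z) ≤
      Real.exp (l * (∑ z, w z * X z) + l ^ 2 * C ^ 2 / 2) := by
  set μ := ∑ z, w z * X z with hμ
  have hμC : |μ| ≤ C := by
    calc |μ| ≤ ∑ z, |w z * X z| := Finset.abs_sum_le_sum_abs _ _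
      _ ≤ ∑ z, w z * C := by
          apply Finset.sum_le_sum
          intro z _
          rw [abs_mul, abs_of_nonneg (hw z)]
          exact mul_le_mul_of_nonneg_left (hX z) (hw z)
      _ = C := by rw [← Finset.sum_mul, hw1, one_mul]
  set p := (C + μ) / (2 * C) with hp
  have hp0 : 0 ≤ p := by
    apply div_nonneg _ (by linarith)
    have := abs_le.1 hμC
    linarith [this.1]
  have hp1 : p ≤ 1 := by
    rw [div_le_one (by linarith)]
    have := abs_le.1 hμC
    linarith [this.2]
  -- chord bound pointwise
  have chord : ∀ z, Real.exp (l * X z) ≤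
      (C - X z) / (2 * C) * Real.exp (-(l * C)) + (C + X z) / (2 * C) * Real.exp (l * C) := by
    intro z
    have h1 := abs_le.1 (hX z)
    have ha : (0:ℝ) ≤ (C - X z) / (2 * C) := by
      apply div_nonneg (by linarith [h1.2]) (by linarith)
    have hb : (0:ℝ) ≤ (C + X z) / (2 * C) := by
      apply div_nonneg (by linarith [h1.1]) (by linarith)
    have hab : (C - X z) / (2 * C) + (C + X z) / (2 * C) = 1 := by
      field_simp; ring
    have := convexOn_exp.2 (Set.mem_univ (-(l * C))) (Set.mem_univ (l * C)) ha hb hab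
    simp only [smul_eq_mul] at this
    have harg : (C - X z) / (2 * C) * -(l * C) + (C + X z) / (2 * C) * (l * C) = l * X z := by
      field_simp; ring
    rw [harg] at this
    exact this
  calc ∑ z, w z * Real.exp (l * X z)
      ≤ ∑ z, w z * ((C - X z) / (2 * C) * Real.exp (-(l * C)) + (C + X z) / (2 * C) * Real.exp (l * C)) := by
        apply Finset.sum_le_sum
        intro z _
        exact mul_le_mul_of_nonneg_left (chord z) (hw z)
    _ = (C - μ) / (2 * C) * Real.exp (-(l * C)) + (C + μ) / (2 * C) * Real.exp (l * C) := by
        have hrw : ∀ z : Z, w z * ((C - X z) / (2 * C) * Real.exp (-(l * C)) + (C + X z) / (2 * C) * Real.exp (l * C)) =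
            (w z * C) * (Real.exp (-(l * C)) / (2 * C) + Real.exp (l * C) / (2 * C)) +
            (w z * X z) * (Real.exp (l * C) / (2 * C) - Real.exp (-(l * C)) / (2 * C)) := by
          intro z; field_simp; ring
        simp only [hrw]
        rw [Finset.sum_add_distrib, ← Finset.sum_mul, ← Finset.sum_mul, ← Finset.sum_mul, hw1, ← hμ]
        field_simp
        ring
    _ = Real.exp (-(l * C)) * ((1 - p) + p * Real.exp (2 * l * C)) := by
        have h2C : (2 * C) ≠ 0 := by positivity
        have : Real.exp (l * C) = Real.exp (-(l * C)) * Real.exp (2 * l * C) := by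
          rw [← Real.exp_add]; ring_nf
        rw [this, hp]
        field_simp
        ring
    _ ≤ Real.exp (-(l * C)) * Real.exp (p * (2 * l * C) + (2 * l * C) ^ 2 / 8) :=
        mul_le_mul_of_nonneg_left (hoeffding_core p hp0 hp1 (2 * l * C)) (Real.exp_pos _).le
    _ = Real.exp (l * μ + l ^ 2 * C ^ 2 / 2) := by
        rw [← Real.exp_add]
        congr 1
        rw [hp]
        field_simp
        ring



theorem stmt_11 {Z : Type*} [Fintype Z] [Nonempty Z]
    (P Q : Z → ℝ) (hPpos : ∀ z, 0 < P z) (hP1 : ∑ z, P z = 1)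
    (hQpos : ∀ z, 0 < Q z) (hQ1 : ∑ z, Q z = 1)
    (C : ℝ)
    (hC : C = Finset.univ.sup' Finset.univ_nonempty (fun z => |Real.log (P z / Q z)|))
    (hCpos : 0 < C)
    (n : ℕ) (hn : 1 ≤ n) (ε : ℝ) (hε : ε ∈ Set.Ioo (0 : ℝ) 1)
    (s : ℝ) (hs : C * Real.sqrt (2 * Real.log (1 / (1 - ε)) / n) < s)
    (β : ℝ)
    (hβ : β = sInf {q : ℝ | ∃ A : Finset (Fin n → Z),
        (∑ z ∈ Aᶜ, ∏ i, P (z i)) ≤ ε ∧ q = ∑ z ∈ A, ∏ i, Q (z i)}) :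
    -(1 / (n : ℝ)) * Real.log β ≤
      (∑ z, P z * Real.log (P z / Q z)) + s +
        (1 / (n : ℝ)) * Real.log (1 / (1 - ε - Real.exp (-(n : ℝ) * s ^ 2 / (2 * C ^ 2)))) := by
  obtain ⟨hε0, hε1⟩ := hε
  have hn0 : (0:ℝ) < n := by exact_mod_cast Nat.lt_of_lt_of_le Nat.zero_lt_one hn
  have hL : 0 < Real.log (1 / (1 - ε)) := by
    apply Real.log_pos
    rw [lt_div_iff₀ (by linarith)]
    linarith
  have hspos : 0 < s := by
    refine lt_of_le_of_lt ?_ hs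
    positivity
  set E := Real.exp (-(n : ℝ) * s ^ 2 / (2 * C ^ 2)) with hE
  have hElt : E < 1 - ε := by
    have h2 : (C * Real.sqrt (2 * Real.log (1/(1-ε)) / n))^2 < s^2 := by
      apply pow_lt_pow_left₀ hs (by positivity)
      norm_num
    rw [mul_pow, Real.sq_sqrt (by positivity)] at h2
    have h1 : Real.log (1 - ε) > -(n:ℝ) * s^2 / (2*C^2) := by
      rw [one_div, Real.log_inv] at h2
      rw [gt_iff_lt, div_lt_iff₀ (by positivity)]
      have hC2 : (0:ℝ) < C^2 := by positivity
      have h4 : (2 * -Real.log (1 - ε) / (n:ℝ)) * (n:ℝ) = 2 * -Real.log (1 - ε) :=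
        div_mul_cancel₀ _ hn0.ne'
      nlinarith [mul_lt_mul_of_pos_right h2 hn0]
    calc E < Real.exp (Real.log (1 - ε)) := Real.exp_lt_exp.2 h1
      _ = 1 - ε := Real.exp_log (by linarith)
  set δ := 1 - ε - E with hδdef
  have hδ : 0 < δ := by rw [hδdef]; linarith
  set X : Z → ℝ := fun z => Real.log (P z / Q z) with hX
  have hXC : ∀ z, |X z| ≤ C := by
    intro z
    rw [hC]
    exact Finset.le_sup' (fun z => |Real.log (P z / Q z)|) (Finset.mem_univ z)
  set D := ∑ z, P z * Real.log (P z / Q z) with hD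
  have hDX : (∑ z, P z * X z) = D := rfl
  have hPQ : ∀ z, P z = Q z * Real.exp (X z) := by
    intro z
    rw [hX]
    rw [Real.exp_log (div_pos (hPpos z) (hQpos z)), eq_comm, mul_comm,
      div_mul_cancel₀ _ (hQpos z).ne']
  set l := s / C^2 with hl
  have hlpos : 0 < l := by positivity
  have mgf := mgf_bound P X (fun z => (hPpos z).le) hP1 C hCpos hXC l
  rw [hDX] at mgf
  set Bc : Finset (Fin n → Z) :=
    Finset.univ.filter (fun f => ¬ ((∑ i, X (f i)) ≤ (n:ℝ)*(D+s))) with hBc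
  have hPn1 : ∑ f : Fin n → Z, ∏ i, P (f i) = 1 := by
    rw [← Fintype.sum_pow, hP1, one_pow]
  have hprodP : ∀ f : Fin n → Z, (0:ℝ) ≤ ∏ i, P (f i) :=
    fun f => Finset.prod_nonneg (fun i _ => (hPpos (f i)).le)
  have hprodQ : ∀ f : Fin n → Z, (0:ℝ) ≤ ∏ i, Q (f i) :=
    fun f => Finset.prod_nonneg (fun i _ => (hQpos (f i)).le)
  have hHoeff : ∑ f ∈ Bc, ∏ i, P (f i) ≤ E := by
    have hexp : ∀ f : Fin n → Z, ∏ i, (P (f i) * Real.exp (l * X (f i))) =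
        (∏ i, P (f i)) * Real.exp (l * ∑ i, X (f i)) := by
      intro f
      rw [Finset.prod_mul_distrib, ← Real.exp_sum, Finset.mul_sum]
    have step1 : ∀ f ∈ Bc, ∏ i, P (f i) ≤
        (∏ i, (P (f i) * Real.exp (l * X (f i)))) * Real.exp (-(l * ((n:ℝ)*(D+s)))) := by
      intro f hf
      rw [hBc, Finset.mem_filter] at hf
      have hgt : (n:ℝ)*(D+s) ≤ ∑ i, X (f i) := le_of_lt (not_le.1 hf.2)
      rw [hexp f, mul_assoc, ← Real.exp_add]
      nth_rewrite 1 [← mul_one (∏ i, P (f i))]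
      apply mul_le_mul_of_nonneg_left _ (hprodP f)
      rw [← Real.exp_zero]
      apply Real.exp_le_exp.2
      nlinarith [hlpos]
    calc ∑ f ∈ Bc, ∏ i, P (f i)
        ≤ ∑ f ∈ Bc, (∏ i, (P (f i) * Real.exp (l * X (f i)))) * Real.exp (-(l * ((n:ℝ)*(D+s)))) :=
          Finset.sum_le_sum step1
      _ ≤ ∑ f : Fin n → Z, (∏ i, (P (f i) * Real.exp (l * X (f i)))) * Real.exp (-(l * ((n:ℝ)*(D+s)))) := by
          apply Finset.sum_le_sum_of_subset_of_nonneg (Finset.subset_univ _)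
          intro f _ _
          exact mul_nonneg (Finset.prod_nonneg (fun i _ =>
            mul_nonneg (hPpos (f i)).le (Real.exp_pos _).le)) (Real.exp_pos _).le
      _ = (∑ z, P z * Real.exp (l * X z))^n * Real.exp (-(l * ((n:ℝ)*(D+s)))) := by
          rw [← Finset.sum_mul, ← Fintype.sum_pow (fun z => P z * Real.exp (l * X z)) n]
      _ ≤ (Real.exp (l * D + l^2*C^2/2))^n * Real.exp (-(l * ((n:ℝ)*(D+s)))) := by
          apply mul_le_mul_of_nonneg_right _ (Real.exp_pos _).le
          apply pow_le_pow_left₀ _ mgf n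
          exact Finset.sum_nonneg (fun z _ => mul_nonneg (hPpos z).le (Real.exp_pos _).le)
      _ = Real.exp ((n:ℝ) * (l * D + l^2*C^2/2) + (-(l * ((n:ℝ)*(D+s))))) := by
          rw [← Real.exp_nat_mul, ← Real.exp_add]
      _ = E := by
          rw [hE]
          congr 1
          rw [hl]
          field_simp
          ring
  have key : ∀ A : Finset (Fin n → Z), (∑ f ∈ Aᶜ, ∏ i, P (f i)) ≤ ε →
      δ * Real.exp (-((n:ℝ)*(D+s))) ≤ ∑ f ∈ A, ∏ i, Q (f i) := by
    intro A hA
    have hQstep : ∀ f ∈ A ∩ Bcᶜ, Real.exp (-((n:ℝ)*(D+s))) * ∏ i, P (f i) ≤ ∏ i, Q (f i) := by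
      intro f hf
      have hfB : f ∈ Bcᶜ := (Finset.mem_inter.1 hf).2
      have hle : ∑ i, X (f i) ≤ (n:ℝ)*(D+s) := by
        rw [Finset.mem_compl, hBc, Finset.mem_filter] at hfB
        push_neg at hfB
        exact hfB (Finset.mem_univ f)
      have hPprod : ∏ i, P (f i) = (∏ i, Q (f i)) * Real.exp (∑ i, X (f i)) := by
        calc ∏ i, P (f i) = ∏ i, (Q (f i) * Real.exp (X (f i))) :=
              Finset.prod_congr rfl (fun i _ => hPQ (f i))
          _ = (∏ i, Q (f i)) * Real.exp (∑ i, X (f i)) := by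
              rw [Finset.prod_mul_distrib, Real.exp_sum]
      calc Real.exp (-((n:ℝ)*(D+s))) * ∏ i, P (f i)
          = (∏ i, Q (f i)) * Real.exp (∑ i, X (f i) - (n:ℝ)*(D+s)) := by
            rw [hPprod,
              show (∑ i, X (f i)) - (n:ℝ)*(D+s) = -((n:ℝ)*(D+s)) + ∑ i, X (f i) by ring,
              Real.exp_add]
            ring
        _ ≤ (∏ i, Q (f i)) * 1 := by
            apply mul_le_mul_of_nonneg_left _ (hprodQ f)
            rw [Real.exp_le_one_iff]
            linarith
        _ = ∏ i, Q (f i) := mul_one _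
    have hPAB : δ ≤ ∑ f ∈ A ∩ Bcᶜ, ∏ i, P (f i) := by
      have hsplit := Finset.sum_add_sum_compl (A ∩ Bcᶜ) (fun f => ∏ i, P (f i))
      rw [hPn1] at hsplit
      have hcompl : (A ∩ Bcᶜ)ᶜ = Aᶜ ∪ Bc := by rw [Finset.compl_inter, compl_compl]
      have hunion := Finset.sum_union_inter (s₁ := Aᶜ) (s₂ := Bc) (f := fun f => ∏ i, P (f i))
      have hnn : 0 ≤ ∑ f ∈ Aᶜ ∩ Bc, ∏ i, P (f i) :=
        Finset.sum_nonneg (fun f _ => hprodP f)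
      rw [hδdef]
      have : ∑ f ∈ (A ∩ Bcᶜ)ᶜ, ∏ i, P (f i) ≤ ε + E := by
        rw [hcompl]
        linarith
      linarith
    calc δ * Real.exp (-((n:ℝ)*(D+s)))
        ≤ (∑ f ∈ A ∩ Bcᶜ, ∏ i, P (f i)) * Real.exp (-((n:ℝ)*(D+s))) :=
          mul_le_mul_of_nonneg_right hPAB (Real.exp_pos _).le
      _ = ∑ f ∈ A ∩ Bcᶜ, Real.exp (-((n:ℝ)*(D+s))) * ∏ i, P (f i) := by
          rw [Finset.sum_mul]
          exact Finset.sum_congr rfl (fun f _ => mul_comm _ _)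
      _ ≤ ∑ f ∈ A ∩ Bcᶜ, ∏ i, Q (f i) := Finset.sum_le_sum hQstep
      _ ≤ ∑ f ∈ A, ∏ i, Q (f i) :=
          Finset.sum_le_sum_of_subset_of_nonneg Finset.inter_subset_left
            (fun f _ _ => hprodQ f)
  set m := δ * Real.exp (-((n:ℝ)*(D+s))) with hm
  have hmpos : 0 < m := by positivity
  have hSne : Set.Nonempty {q : ℝ | ∃ A : Finset (Fin n → Z),
      (∑ z ∈ Aᶜ, ∏ i, P (z i)) ≤ ε ∧ q = ∑ z ∈ A, ∏ i, Q (z i)} := by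
    refine ⟨∑ f ∈ (univ : Finset (Fin n → Z)), ∏ i, Q (f i), univ, ?_, rfl⟩
    simp [hε0.le]
  have hβm : m ≤ β := by
    rw [hβ]
    apply le_csInf hSne
    rintro q ⟨A, hA, rfl⟩
    exact key A hA
  have hlogm : Real.log m ≤ Real.log β := Real.log_le_log hmpos hβm
  have hlogm_eq : Real.log m = Real.log δ - (n:ℝ)*(D+s) := by
    rw [hm, Real.log_mul hδ.ne' (Real.exp_pos _).ne', Real.log_exp]
    ring
  have hc : -(1/(n:ℝ)) ≤ 0 := by
    have : (0:ℝ) ≤ 1/(n:ℝ) := by positivity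
    linarith
  have h1 : -(1/(n:ℝ)) * Real.log β ≤ -(1/(n:ℝ)) * Real.log m :=
    mul_le_mul_of_nonpos_left hlogm hc
  calc -(1/(n:ℝ)) * Real.log β ≤ -(1/(n:ℝ)) * Real.log m := h1
    _ = D + s + (1/(n:ℝ)) * Real.log (1/δ) := by
        rw [hlogm_eq, one_div δ, Real.log_inv]
        field_simp
        ring
end
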